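/- arXiv:2506.04525 — 4 statements merged into one kernel-verified Lean document; each statement's English description precedes it below -/
import Mathlib

section
/- Let R* be an m×n nonnegative matrix with a block-diagonal 'majority-minority' structure: there exist partitions of users [m] = U_maj ∪ U_min and items [n] = I_maj ∪ I_min such that r*_{u,i} = 0 whenever u ∈ U_maj, i ∈ I_min or u ∈ U_min, i ∈ I_maj. Suppose Ω ⊆ [m]×[n] is a set of observed entries such that every observed entry (u,i) with u ∈ U_min and i ∈ I_min satisfies r*_{u,i} = 0. Then among all matrices X minimizing rank(X) subject to x_{u,i} = r*_{u,i} for all (u,i) ∈ Ω, the sparsest such minimizer has x_{u,i} = 0 for all u ∈ [m] and all i ∈ I_min. -/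
open Matrix

/-- number of nonzero entries of a matrix -/
noncomputable def nnz {m n : ℕ} (X : Matrix (Fin m) (Fin n) ℝ) : ℕ :=
  {p : Fin m × Fin n | X p.1 p.2 ≠ 0}.ncard

/-- The sparsest rank-minimizing completion of a majority-minority
matrix, when no nonzero minority-block entry is observed, vanishes on all
minority columns. -/
theorem stmt_0 {m n : ℕ} (R : Matrix (Fin m) (Fin n) ℝ)
    (Umaj Umin : Finset (Fin m)) (Imaj Imin : Finset (Fin n))
    (hUunion : Umaj ∪ Umin = Finset.univ) (hUdisj : Disjoint Umaj Umin)
    (hIunion : Imaj ∪ Imin = Finset.univ) (hIdisj : Disjoint Imaj Imin)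
    (hnonneg : ∀ u i, 0 ≤ R u i)
    (hnozero : ∀ u : Fin m, 0 < ∑ i, R u i)
    (hcross : ∀ u i, ((u ∈ Umaj ∧ i ∈ Imin) ∨ (u ∈ Umin ∧ i ∈ Imaj)) → R u i = 0)
    (Ω : Finset (Fin m × Fin n))
    (hΩ : ∀ p ∈ Ω, p.1 ∈ Umin → p.2 ∈ Imin → R p.1 p.2 = 0)
    (X : Matrix (Fin m) (Fin n) ℝ)
    (hfeas : ∀ p ∈ Ω, X p.1 p.2 = R p.1 p.2)
    (hopt : ∀ Y : Matrix (Fin m) (Fin n) ℝ,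
      (∀ p ∈ Ω, Y p.1 p.2 = R p.1 p.2) → X.rank ≤ Y.rank)
    (hsparse : ∀ Y : Matrix (Fin m) (Fin n) ℝ,
      (∀ p ∈ Ω, Y p.1 p.2 = R p.1 p.2) →
      (∀ Z : Matrix (Fin m) (Fin n) ℝ,
        (∀ p ∈ Ω, Z p.1 p.2 = R p.1 p.2) → Y.rank ≤ Z.rank) →
      nnz X ≤ nnz Y) :
    ∀ u : Fin m, ∀ i ∈ Imin, X u i = 0 := by
  intro u i hi
  by_contra hne
  -- Y: X with minority columns zeroed out
  set D : Matrix (Fin n) (Fin n) ℝ :=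
    Matrix.diagonal (fun j => if j ∈ Imin then 0 else 1) with hD
  set Y : Matrix (Fin m) (Fin n) ℝ := X * D with hY
  have hYentry : ∀ v j, Y v j = if j ∈ Imin then 0 else X v j := by
    intro v j
    simp only [hY, hD, Matrix.mul_apply, Matrix.diagonal_apply]
    rw [Finset.sum_eq_single j]
    · by_cases h : j ∈ Imin <;> simp [h]
    · intro b _ hb; simp [hb]
    · simp
  -- Y is feasible
  have hYfeas : ∀ p ∈ Ω, Y p.1 p.2 = R p.1 p.2 := by
    intro p hp
    rw [hYentry]
    by_cases h2 : p.2 ∈ Imin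
    · simp only [h2, if_true]
      by_cases h1 : p.1 ∈ Umin
      · exact (hΩ p hp h1 h2).symm
      · have h1' : p.1 ∈ Umaj := by
          have := Finset.mem_univ p.1
          rw [← hUunion, Finset.mem_union] at this
          tauto
        exact (hcross p.1 p.2 (Or.inl ⟨h1', h2⟩)).symm
    · simp only [h2, if_false]; exact hfeas p hp
  -- rank Y ≤ rank X, so Y is a rank minimizer
  have hYrank : Y.rank ≤ X.rank := Matrix.rank_mul_le_left X D
  have hXrank : X.rank ≤ Y.rank := hopt Y hYfeas
  have hYopt : ∀ Z : Matrix (Fin m) (Fin n) ℝ,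
      (∀ p ∈ Ω, Z p.1 p.2 = R p.1 p.2) → Y.rank ≤ Z.rank := by
    intro Z hZ
    exact le_trans hYrank (hopt Z hZ)
  have hle : nnz X ≤ nnz Y := hsparse Y hYfeas hYopt
  -- but Y has strictly fewer nonzeros
  have hsub : {p : Fin m × Fin n | Y p.1 p.2 ≠ 0} ⊂ {p : Fin m × Fin n | X p.1 p.2 ≠ 0} := by
    constructor
    · intro p hp
      simp only [Set.mem_setOf_eq, hYentry] at hp ⊢
      by_cases h : p.2 ∈ Imin
      · simp [h] at hp
      · simpa [h] using hp
    · intro hsup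
      have : X u i ≠ 0 := hne
      have hmem : (u, i) ∈ {p : Fin m × Fin n | X p.1 p.2 ≠ 0} := this
      have := hsup hmem
      simp only [Set.mem_setOf_eq, hYentry] at this
      simp [hi] at this
  have hlt : nnz Y < nnz X :=
    Set.ncard_lt_ncard hsub (Set.toFinite _)
  omega
end

section
/- If X̂ is a feasible optimal (rank-minimizing) solution to the matrix completion problem with observed set Ω satisfying the majority-minority observation condition, then the matrix X̂' obtained from X̂ by zeroing all entries outside the majority block (i.e., keeping X̂ restricted to rows in U_maj and columns in I_maj, zero elsewhere) is also feasible and achieves rank(X̂') ≤ rank(X̂), hence is also optimal. -/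
open Matrix

/-- zeroing everything outside the majority block of a feasible
rank-minimizing completion yields a feasible completion of rank at most the
original rank (hence also optimal). -/
theorem stmt_1 {m n : ℕ} (R : Matrix (Fin m) (Fin n) ℝ)
    (Umaj Umin : Finset (Fin m)) (Imaj Imin : Finset (Fin n))
    (hUunion : Umaj ∪ Umin = Finset.univ) (hUdisj : Disjoint Umaj Umin)
    (hIunion : Imaj ∪ Imin = Finset.univ) (hIdisj : Disjoint Imaj Imin)
    (hnonneg : ∀ u i, 0 ≤ R u i)
    (hcross : ∀ u i, ((u ∈ Umaj ∧ i ∈ Imin) ∨ (u ∈ Umin ∧ i ∈ Imaj)) → R u i = 0)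
    (Ω : Finset (Fin m × Fin n))
    (hΩ : ∀ p ∈ Ω, p.1 ∈ Umin → p.2 ∈ Imin → R p.1 p.2 = 0)
    (X : Matrix (Fin m) (Fin n) ℝ)
    (hfeas : ∀ p ∈ Ω, X p.1 p.2 = R p.1 p.2)
    (hopt : ∀ Y : Matrix (Fin m) (Fin n) ℝ,
      (∀ p ∈ Ω, Y p.1 p.2 = R p.1 p.2) → X.rank ≤ Y.rank)
    (X' : Matrix (Fin m) (Fin n) ℝ)
    (hX' : ∀ u i, X' u i = if u ∈ Umaj ∧ i ∈ Imaj then X u i else 0) :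
    (∀ p ∈ Ω, X' p.1 p.2 = R p.1 p.2) ∧ X'.rank ≤ X.rank := by
  constructor
  · intro p hp
    rw [hX']
    by_cases hu : p.1 ∈ Umaj
    · by_cases hi : p.2 ∈ Imaj
      · simp [hu, hi, hfeas p hp]
      · have hi' : p.2 ∈ Imin := by
          have := hIunion ▸ Finset.mem_univ p.2
          simpa [hi] using Finset.mem_union.mp this
        simp [hi, hcross p.1 p.2 (Or.inl ⟨hu, hi'⟩)]
    · have hu' : p.1 ∈ Umin := by
        have := hUunion ▸ Finset.mem_univ p.1
        simpa [hu] using Finset.mem_union.mp this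
      by_cases hi : p.2 ∈ Imaj
      · simp [hu, hcross p.1 p.2 (Or.inr ⟨hu', hi⟩)]
      · have hi' : p.2 ∈ Imin := by
          have := hIunion ▸ Finset.mem_univ p.2
          simpa [hi] using Finset.mem_union.mp this
        simp [hu, hΩ p hp hu' hi']
  · have key : X' = (Matrix.diagonal fun u => if u ∈ Umaj then (1:ℝ) else 0) *
        X * (Matrix.diagonal fun i => if i ∈ Imaj then (1:ℝ) else 0) := by
      ext u i
      rw [hX']
      simp [Matrix.mul_diagonal, Matrix.diagonal_mul, mul_comm]
      by_cases hu : u ∈ Umaj <;> by_cases hi : i ∈ Imaj <;> simp [hu, hi, mul_comm]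
    rw [key]
    calc ((Matrix.diagonal fun u => if u ∈ Umaj then (1:ℝ) else 0) * X *
          (Matrix.diagonal fun i => if i ∈ Imaj then (1:ℝ) else 0)).rank
        ≤ ((Matrix.diagonal fun u => if u ∈ Umaj then (1:ℝ) else 0) * X).rank :=
          Matrix.rank_mul_le_left _ _
      _ ≤ X.rank := Matrix.rank_mul_le_right _ _
end

section
/- Let M ∈ ℝ^{d×d} be positive semi-definite with rank k ≤ d and eigenvalues λ₁ ≥ ... ≥ λ_d. For a ∈ ℝ^d and c ∈ ℝ, let A be the (d+1)×(d+1) block matrix with top-left entry c, top-right row a^T, bottom-left column a, and bottom-right block M. Then λ_{k+1}(A) ≥ min(c, λ_k) − ‖a‖₂. -/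
open Matrix

/-- `sortedEig M hM k` is the `k`-th largest eigenvalue (1-indexed) of the
Hermitian matrix `M`. -/
noncomputable def sortedEig {d : ℕ} (M : Matrix (Fin d) (Fin d) ℝ)
    (hM : M.IsHermitian) (k : ℕ) : ℝ :=
  if h : k - 1 < d then
    ((hM.eigenvalues ∘ Tuple.sort hM.eigenvalues) (Fin.rev ⟨k - 1, h⟩))
  else 0

section CDhelpers
open Finset Submodule
open scoped RealInnerProductSpace

variable {n : ℕ}

private lemma cd_count_le_aux (f : Fin n → ℝ) {m : ℕ} (h : m < n) :
    n - m ≤ (Finset.univ.filter fun i => f i ≤ (f ∘ Tuple.sort f) (Fin.rev ⟨m, h⟩)).card := by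
  classical
  set j₀ : Fin n := Fin.rev ⟨m, h⟩
  have hsub : (Finset.Iic j₀).image (Tuple.sort f) ⊆
      Finset.univ.filter fun i => f i ≤ (f ∘ Tuple.sort f) j₀ := by
    intro i hi
    simp only [Finset.mem_image, Finset.mem_Iic] at hi
    obtain ⟨j, hj, rfl⟩ := hi
    simp only [Finset.mem_filter, Finset.mem_univ, true_and]
    exact Tuple.monotone_sort f hj
  have hcard := Finset.card_le_card hsub
  rwa [Finset.card_image_of_injective _ (Equiv.injective _), Fin.card_Iic,
    show (j₀ : ℕ) = n - (m+1) from Fin.val_rev _, show n - (m+1) + 1 = n - m by omega] at hcard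

private lemma cd_count_ge_aux (f : Fin n → ℝ) {m : ℕ} (h : m < n) :
    m + 1 ≤ (Finset.univ.filter fun i => (f ∘ Tuple.sort f) (Fin.rev ⟨m, h⟩) ≤ f i).card := by
  classical
  set j₀ : Fin n := Fin.rev ⟨m, h⟩
  have hsub : (Finset.Ici j₀).image (Tuple.sort f) ⊆
      Finset.univ.filter fun i => (f ∘ Tuple.sort f) j₀ ≤ f i := by
    intro i hi
    simp only [Finset.mem_image, Finset.mem_Ici] at hi
    obtain ⟨j, hj, rfl⟩ := hi
    simp only [Finset.mem_filter, Finset.mem_univ, true_and]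
    exact Tuple.monotone_sort f hj
  have hcard := Finset.card_le_card hsub
  rwa [Finset.card_image_of_injective _ (Equiv.injective _), Fin.card_Ici,
    show (j₀ : ℕ) = n - (m+1) from Fin.val_rev _, show n - (n - (m+1)) = m + 1 by omega] at hcard

private lemma cd_dot_eq_inner (x y : EuclideanSpace ℝ (Fin n)) :
    (x : Fin n → ℝ) ⬝ᵥ (y : Fin n → ℝ) = ⟪x, y⟫ := by
  simp [PiLp.inner_apply, dotProduct, mul_comm]

private lemma cd_inner_eq_sum_repr {E : Type*} [NormedAddCommGroup E] [InnerProductSpace ℝ E]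
    (b : OrthonormalBasis (Fin n) ℝ E) (x y : E) :
    ⟪x, y⟫ = ∑ i, b.repr x i * b.repr y i := by
  rw [← b.repr.inner_map_map x y]
  simp only [PiLp.inner_apply, RCLike.inner_apply, conj_trivial]
  exact Finset.sum_congr rfl fun _ _ => mul_comm _ _

private lemma cd_repr_eq_zero_of_mem {E : Type*} [NormedAddCommGroup E] [InnerProductSpace ℝ E]
    {ι : Type*} [Fintype ι] [DecidableEq ι]
    (b : OrthonormalBasis ι ℝ E) (S : Finset ι) {x : E}
    (hx : x ∈ Submodule.span ℝ (⇑b '' ↑S)) {i : ι} (hi : i ∉ S) :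
    b.repr x i = 0 := by
  have hK : Submodule.span ℝ (⇑b '' ↑S) ≤ LinearMap.ker (innerSL ℝ (b i) : E →ₗ[ℝ] ℝ) := by
    rw [Submodule.span_le]
    rintro _ ⟨j, hj, rfl⟩
    simp only [SetLike.mem_coe, LinearMap.mem_ker, ContinuousLinearMap.coe_coe, innerSL_apply_apply]
    have : i ≠ j := by rintro rfl; exact hi hj
    exact b.orthonormal.2 this
  have := hK hx
  simp only [LinearMap.mem_ker, ContinuousLinearMap.coe_coe, innerSL_apply_apply] at this
  rw [b.repr_apply_apply, this]

private lemma cd_finrank_span_orthonormal {E : Type*} [NormedAddCommGroup E]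
    [InnerProductSpace ℝ E] {ι : Type*} {b : ι → E} (hb : Orthonormal ℝ b) (S : Finset ι) :
    Module.finrank ℝ (Submodule.span ℝ (b '' ↑S)) = S.card := by
  classical
  have li : LinearIndependent ℝ (b ∘ (Subtype.val : ↥S → ι)) :=
    hb.linearIndependent.comp _ Subtype.val_injective
  have h1 := finrank_span_eq_card li
  have h2 : Set.range (b ∘ (Subtype.val : ↥S → ι)) = b '' ↑S := by
    ext y; simp [Set.range_comp]
  rw [h2] at h1
  simpa [Fintype.card_coe] using h1

variable {A : Matrix (Fin n) (Fin n) ℝ} (hA : A.IsHermitian)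

private lemma cd_repr_mulVec (x : EuclideanSpace ℝ (Fin n)) (i : Fin n) :
    hA.eigenvectorBasis.repr (WithLp.toLp 2 (A *ᵥ x : Fin n → ℝ) : EuclideanSpace ℝ (Fin n)) i
      = hA.eigenvalues i * hA.eigenvectorBasis.repr x i := by
  rw [hA.eigenvectorBasis.repr_apply_apply, hA.eigenvectorBasis.repr_apply_apply]
  rw [← cd_dot_eq_inner, ← cd_dot_eq_inner]
  have hsym : Aᵀ = A := by
    rw [← conjTranspose_eq_transpose_of_trivial]; exact hA.eq
  calc (hA.eigenvectorBasis i : Fin n → ℝ) ⬝ᵥ (A *ᵥ x)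
      = (A *ᵥ (hA.eigenvectorBasis i : Fin n → ℝ)) ⬝ᵥ x := by
        rw [dotProduct_mulVec, ← mulVec_transpose, hsym]
    _ = hA.eigenvalues i * ((hA.eigenvectorBasis i : Fin n → ℝ) ⬝ᵥ x) := by
        have h1 : (A *ᵥ (hA.eigenvectorBasis i : Fin n → ℝ))
            = hA.eigenvalues i • (hA.eigenvectorBasis i : Fin n → ℝ) :=
          hA.mulVec_eigenvectorBasis i
        rw [h1, smul_dotProduct, smul_eq_mul]

private lemma cd_quad_expand (x : EuclideanSpace ℝ (Fin n)) :
    (x : Fin n → ℝ) ⬝ᵥ (A *ᵥ x) =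
      ∑ i, hA.eigenvalues i * (hA.eigenvectorBasis.repr x i) ^ 2 := by
  rw [cd_dot_eq_inner x (WithLp.toLp 2 (A *ᵥ x : Fin n → ℝ) : EuclideanSpace ℝ (Fin n)),
    cd_inner_eq_sum_repr hA.eigenvectorBasis]
  exact Finset.sum_congr rfl fun i _ => by rw [cd_repr_mulVec hA]; ring

private lemma cd_norm_expand (x : EuclideanSpace ℝ (Fin n)) :
    (x : Fin n → ℝ) ⬝ᵥ (x : Fin n → ℝ) = ∑ i, (hA.eigenvectorBasis.repr x i) ^ 2 := by
  rw [cd_dot_eq_inner x x, cd_inner_eq_sum_repr hA.eigenvectorBasis]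
  exact Finset.sum_congr rfl fun i _ => (sq _).symm

private lemma cd_quad_le_of_mem (t : ℝ) (S : Finset (Fin n))
    (hS : ∀ i ∈ S, hA.eigenvalues i ≤ t) (x : EuclideanSpace ℝ (Fin n))
    (hx : x ∈ Submodule.span ℝ (⇑hA.eigenvectorBasis '' ↑S)) :
    (x : Fin n → ℝ) ⬝ᵥ (A *ᵥ x) ≤ t * ((x : Fin n → ℝ) ⬝ᵥ x) := by
  classical
  rw [cd_quad_expand hA, cd_norm_expand hA, Finset.mul_sum]
  apply Finset.sum_le_sum
  intro i _
  by_cases hi : i ∈ S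
  · exact mul_le_mul_of_nonneg_right (hS i hi) (sq_nonneg _)
  · rw [cd_repr_eq_zero_of_mem hA.eigenvectorBasis S hx hi]; simp

private lemma cd_quad_ge_of_mem (s : ℝ) (S : Finset (Fin n))
    (hS : ∀ i ∈ S, s ≤ hA.eigenvalues i) (x : EuclideanSpace ℝ (Fin n))
    (hx : x ∈ Submodule.span ℝ (⇑hA.eigenvectorBasis '' ↑S)) :
    s * ((x : Fin n → ℝ) ⬝ᵥ x) ≤ (x : Fin n → ℝ) ⬝ᵥ (A *ᵥ x) := by
  classical
  rw [cd_quad_expand hA, cd_norm_expand hA, Finset.mul_sum]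
  apply Finset.sum_le_sum
  intro i _
  by_cases hi : i ∈ S
  · exact mul_le_mul_of_nonneg_right (hS i hi) (sq_nonneg _)
  · rw [cd_repr_eq_zero_of_mem hA.eigenvectorBasis S hx hi]; simp

private lemma cd_cauchy_schwarz {d : ℕ} (f g : Fin d → ℝ) :
    |f ⬝ᵥ g| ≤ Real.sqrt (∑ i, f i ^ 2) * Real.sqrt (∑ i, g i ^ 2) := by
  calc |f ⬝ᵥ g| = Real.sqrt ((f ⬝ᵥ g) ^ 2) := (Real.sqrt_sq_eq_abs _).symm
    _ ≤ Real.sqrt ((∑ i, f i ^ 2) * ∑ i, g i ^ 2) :=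
        Real.sqrt_le_sqrt (Finset.sum_mul_sq_le_sq_mul_sq _ f g)
    _ = _ := Real.sqrt_mul (Finset.sum_nonneg fun i _ => sq_nonneg _) _

end CDhelpers
open scoped RealInnerProductSpace

section CDembed
variable {d : ℕ}

/-- Embedding of `ℝ^d` into `ℝ^{1+d}` as the last `d` coordinates. -/
private noncomputable def cdJ (d : ℕ) :
    EuclideanSpace ℝ (Fin d) →ₗ[ℝ] EuclideanSpace ℝ (Fin (1 + d)) where
  toFun y := WithLp.toLp 2 (fun i => Sum.elim (fun _ => (0:ℝ)) y (finSumFinEquiv.symm i) : Fin (1+d) → ℝ)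
  map_add' y z := by
    ext i
    show (Sum.elim _ _ _ : ℝ) = Sum.elim _ _ _ + Sum.elim _ _ _
    cases h : finSumFinEquiv.symm i <;> simp
  map_smul' r y := by
    ext i
    show Sum.elim _ _ _ = r * Sum.elim _ _ _
    cases h : finSumFinEquiv.symm i <;> simp

private noncomputable def cdE0 (d : ℕ) : EuclideanSpace ℝ (Fin (1 + d)) :=
  WithLp.toLp 2 (fun i => Sum.elim (fun _ => (1:ℝ)) (fun _ => (0:ℝ)) (finSumFinEquiv.symm i) : Fin (1+d) → ℝ)

private lemma cd_sum_equiv (g : Fin (1 + d) → ℝ) :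
    ∑ i, g i = ∑ s : Fin 1 ⊕ Fin d, g (finSumFinEquiv s) :=
  (Equiv.sum_comp finSumFinEquiv g).symm

private lemma cd_dotJJ (y z : EuclideanSpace ℝ (Fin d)) :
    (cdJ d y : Fin (1+d) → ℝ) ⬝ᵥ (cdJ d z : Fin (1+d) → ℝ) = (y : Fin d → ℝ) ⬝ᵥ z := by
  show ∑ i, _ = _
  rw [cd_sum_equiv]
  simp [cdJ, dotProduct, Fintype.sum_sum_type]

private lemma cd_dotE0J (y : EuclideanSpace ℝ (Fin d)) :
    (cdE0 d : Fin (1+d) → ℝ) ⬝ᵥ (cdJ d y : Fin (1+d) → ℝ) = 0 := by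
  show ∑ i, _ = _
  rw [cd_sum_equiv]
  simp [cdJ, cdE0, Fintype.sum_sum_type]

private lemma cd_dotJE0 (y : EuclideanSpace ℝ (Fin d)) :
    (cdJ d y : Fin (1+d) → ℝ) ⬝ᵥ (cdE0 d : Fin (1+d) → ℝ) = 0 := by
  rw [dotProduct_comm]; exact cd_dotE0J y

private lemma cd_dotE0E0 : (cdE0 d : Fin (1+d) → ℝ) ⬝ᵥ (cdE0 d : Fin (1+d) → ℝ) = 1 := by
  show ∑ i, _ = _
  rw [cd_sum_equiv]
  simp [cdE0, Fintype.sum_sum_type]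

private lemma cd_vec_eq (t : ℝ) (y : EuclideanSpace ℝ (Fin d)) :
    ((t • cdE0 d + cdJ d y : EuclideanSpace ℝ (Fin (1+d))) : Fin (1+d) → ℝ)
      = fun i => Sum.elim (fun _ => t) (y : Fin d → ℝ) (finSumFinEquiv.symm i) := by
  funext i
  show t * Sum.elim _ _ _ + Sum.elim _ _ _ = Sum.elim _ _ _
  cases h : finSumFinEquiv.symm i <;> simp

private lemma cd_norm_eq (t : ℝ) (y : EuclideanSpace ℝ (Fin d)) :
    ((t • cdE0 d + cdJ d y : EuclideanSpace ℝ (Fin (1+d))) : Fin (1+d) → ℝ) ⬝ᵥ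
      ((t • cdE0 d + cdJ d y : EuclideanSpace ℝ (Fin (1+d))) : Fin (1+d) → ℝ)
      = t ^ 2 + (y : Fin d → ℝ) ⬝ᵥ (y : Fin d → ℝ) := by
  rw [cd_vec_eq]
  show ∑ i, _ = _
  rw [cd_sum_equiv]
  simp [dotProduct, Fintype.sum_sum_type, sq]

private lemma cd_quad_A (M : Matrix (Fin d) (Fin d) ℝ) (a : Fin d → ℝ) (c : ℝ)
    (t : ℝ) (y : EuclideanSpace ℝ (Fin d)) :
    let A := Matrix.reindex finSumFinEquiv finSumFinEquiv
      (Matrix.fromBlocks (Matrix.of fun (_ : Fin 1) (_ : Fin 1) => c)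
        (Matrix.of fun (_ : Fin 1) (j : Fin d) => a j)
        (Matrix.of fun (i : Fin d) (_ : Fin 1) => a i) M)
    ((t • cdE0 d + cdJ d y : EuclideanSpace ℝ (Fin (1+d))) : Fin (1+d) → ℝ) ⬝ᵥ
      (A *ᵥ ((t • cdE0 d + cdJ d y : EuclideanSpace ℝ (Fin (1+d))) : Fin (1+d) → ℝ))
      = c * t ^ 2 + 2 * t * (a ⬝ᵥ (y : Fin d → ℝ)) + (y : Fin d → ℝ) ⬝ᵥ (M *ᵥ y) := by
  intro A
  set x : Fin (1+d) → ℝ := ((t • cdE0 d + cdJ d y : EuclideanSpace ℝ (Fin (1+d))) : Fin (1+d) → ℝ)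
  have hx : x = fun i => Sum.elim (fun _ => t) (y : Fin d → ℝ) (finSumFinEquiv.symm i) :=
    cd_vec_eq t y
  have hxe : x ∘ finSumFinEquiv = Sum.elim (fun _ => t) (y : Fin d → ℝ) := by
    funext s; rw [hx]; simp
  have hmul : A *ᵥ x = (Matrix.fromBlocks (Matrix.of fun (_ : Fin 1) (_ : Fin 1) => c)
        (Matrix.of fun (_ : Fin 1) (j : Fin d) => a j)
        (Matrix.of fun (i : Fin d) (_ : Fin 1) => a i) M *ᵥ
          Sum.elim (fun _ => t) (y : Fin d → ℝ)) ∘ finSumFinEquiv.symm := by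
    rw [show A = (Matrix.fromBlocks _ _ _ M).submatrix ⇑finSumFinEquiv.symm ⇑finSumFinEquiv.symm
      from Matrix.reindex_apply _ _ _, Matrix.submatrix_mulVec_equiv, ← hxe]
    rfl
  rw [hmul]
  have : x ⬝ᵥ ((Matrix.fromBlocks (Matrix.of fun (_ : Fin 1) (_ : Fin 1) => c)
        (Matrix.of fun (_ : Fin 1) (j : Fin d) => a j)
        (Matrix.of fun (i : Fin d) (_ : Fin 1) => a i) M *ᵥ Sum.elim (fun _ => t) (y : Fin d → ℝ)) ∘
      ⇑finSumFinEquiv.symm)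
      = Sum.elim (fun _ => t) (y : Fin d → ℝ) ⬝ᵥ
        (Matrix.fromBlocks (Matrix.of fun (_ : Fin 1) (_ : Fin 1) => c)
        (Matrix.of fun (_ : Fin 1) (j : Fin d) => a j)
        (Matrix.of fun (i : Fin d) (_ : Fin 1) => a i) M *ᵥ
          Sum.elim (fun _ => t) (y : Fin d → ℝ)) := by
    show ∑ i, _ = _
    rw [cd_sum_equiv]
    refine Finset.sum_congr rfl fun s _ => ?_
    rw [hx]
    simp
  rw [this, Matrix.fromBlocks_mulVec, sumElim_dotProduct_sumElim]
  simp [dotProduct, mulVec, Fin.sum_univ_one, mul_add, Finset.sum_add_distrib, Finset.mul_sum]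
  ring_nf
  rw [show (∑ x : Fin d, t * y x * a x) = ∑ x : Fin d, t * a x * y x from
      Finset.sum_congr rfl fun i _ => by ring,
    show (∑ x : Fin d, t * a x * y x * 2)
        = (∑ x : Fin d, t * a x * y x) + ∑ x : Fin d, t * a x * y x from by
      rw [← Finset.sum_add_distrib]; exact Finset.sum_congr rfl fun i _ => by ring]
  ring
end CDembed


set_option maxHeartbeats 1000000 in
/-- Chrétien–Darses, Cor. 3.5: appending a row/column
(c, aᵀ; a, M) to a PSD matrix M of rank k gives
λ_{k+1}(A) ≥ min(c, λ_k(M)) − ‖a‖₂. -/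
theorem stmt_6 {d : ℕ} (M : Matrix (Fin d) (Fin d) ℝ)
    (hPSD : M.PosSemidef) (k : ℕ) (hk : k ≤ d) (hrank : M.rank = k)
    (a : Fin d → ℝ) (c : ℝ)
    (A : Matrix (Fin (1 + d)) (Fin (1 + d)) ℝ)
    (hA : A = Matrix.reindex finSumFinEquiv finSumFinEquiv
      (Matrix.fromBlocks (Matrix.of fun (_ : Fin 1) (_ : Fin 1) => c)
        (Matrix.of fun (_ : Fin 1) (j : Fin d) => a j)
        (Matrix.of fun (i : Fin d) (_ : Fin 1) => a i) M))
    (hAH : A.IsHermitian) :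
    min c (sortedEig M hPSD.isHermitian k) - Real.sqrt (∑ i, (a i) ^ 2) ≤
      sortedEig A hAH (k + 1) := by
  classical
  have hk1 : k + 1 - 1 < 1 + d := by omega
  set tA := sortedEig A hAH (k + 1) with htAdef
  have htA : tA = (hAH.eigenvalues ∘ Tuple.sort hAH.eigenvalues) (Fin.rev ⟨k + 1 - 1, hk1⟩) :=
    dif_pos hk1
  set s := sortedEig M hPSD.isHermitian k with hsdef
  set SA : Finset (Fin (1 + d)) :=
    Finset.univ.filter (fun i => hAH.eigenvalues i ≤ tA) with hSAdef
  have hcardA : 1 + d - (k + 1 - 1) ≤ SA.card := by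
    rw [hSAdef, htA]
    exact cd_count_le_aux _ hk1
  set SM : Finset (Fin d) :=
    Finset.univ.filter (fun i => s ≤ hPSD.isHermitian.eigenvalues i) with hSMdef
  have hcardM : k ≤ SM.card := by
    rcases Nat.eq_zero_or_pos k with hk0 | hkpos
    · omega
    · have hmd : k - 1 < d := by omega
      have hs2 : s = (hPSD.isHermitian.eigenvalues ∘ Tuple.sort hPSD.isHermitian.eigenvalues)
          (Fin.rev ⟨k - 1, hmd⟩) := dif_pos hmd
      have h := cd_count_ge_aux hPSD.isHermitian.eigenvalues hmd
      rw [hSMdef, hs2]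
      exact le_trans (by omega : k ≤ k - 1 + 1) h
  -- the subspaces
  set W := Submodule.span ℝ (⇑hAH.eigenvectorBasis '' ↑SA) with hWdef
  have hWrank : Module.finrank ℝ W = SA.card :=
    cd_finrank_span_orthonormal hAH.eigenvectorBasis.orthonormal SA
  set Y : Set (EuclideanSpace ℝ (Fin d)) := ⇑hPSD.isHermitian.eigenvectorBasis '' ↑SM with hYdef
  set V := Submodule.span ℝ (insert (cdE0 d) (⇑(cdJ d) '' Y)) with hVdef
  -- orthonormal family spanning a large subspace of V
  set w : Unit ⊕ ↥SM → EuclideanSpace ℝ (Fin (1 + d)) :=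
    Sum.elim (fun _ => cdE0 d) (fun i => cdJ d (hPSD.isHermitian.eigenvectorBasis i.val))
    with hwdef
  have huMo := hPSD.isHermitian.eigenvectorBasis.orthonormal
  rw [orthonormal_iff_ite] at huMo
  have hw : Orthonormal ℝ w := by
    rw [orthonormal_iff_ite]
    rintro (i | i) (j | j)
    · rw [← cd_dot_eq_inner]
      simp [hwdef, cd_dotE0E0]
    · rw [← cd_dot_eq_inner]
      simp [hwdef, cd_dotE0J]
    · rw [← cd_dot_eq_inner]
      simp [hwdef, cd_dotJE0]
    · rw [← cd_dot_eq_inner]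
      show ((cdJ d _ : Fin (1+d) → ℝ)) ⬝ᵥ ((cdJ d _ : Fin (1+d) → ℝ)) = _
      rw [cd_dotJJ, cd_dot_eq_inner, huMo i.val j.val]
      by_cases hij : i = j
      · simp [hij]
      · have : (i : Fin d) ≠ (j : Fin d) := fun h => hij (Subtype.ext h)
        simp [hij, this]
  have hwV : ∀ p, w p ∈ V := by
    rintro (p | p)
    · exact Submodule.subset_span (Set.mem_insert _ _)
    · exact Submodule.subset_span
        (Set.mem_insert_of_mem _ ⟨_, ⟨_, p.2, rfl⟩, rfl⟩)
  have hVrank : 1 + SM.card ≤ Module.finrank ℝ V := by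
    have hle : Submodule.span ℝ (Set.range w) ≤ V :=
      Submodule.span_le.mpr (Set.range_subset_iff.mpr hwV)
    have h1 := finrank_span_eq_card hw.linearIndependent
    have h2 : Fintype.card (Unit ⊕ ↥SM) = 1 + SM.card := by
      simp [Fintype.card_coe]
    calc 1 + SM.card = Module.finrank ℝ (Submodule.span ℝ (Set.range w)) := by rw [h1, h2]
      _ ≤ Module.finrank ℝ V := Submodule.finrank_mono hle
  -- the intersection is nontrivial
  have hdim : V ⊓ W ≠ ⊥ := by
    intro hbot
    have h1 := Submodule.finrank_sup_add_finrank_inf_eq V W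
    have h2 : Module.finrank ℝ (V ⊔ W : Submodule ℝ (EuclideanSpace ℝ (Fin (1 + d)))) ≤ 1 + d := by
      have h3 := Submodule.finrank_le (V ⊔ W)
      rwa [finrank_euclideanSpace_fin] at h3
    rw [hbot, finrank_bot] at h1
    omega
  obtain ⟨x, hxVW, hx0⟩ := (Submodule.ne_bot_iff _).mp hdim
  have hxW : x ∈ W := hxVW.2
  have hxV : x ∈ V := hxVW.1
  rw [hVdef, Submodule.mem_span_insert] at hxV
  obtain ⟨r, z, hz, rfl⟩ := hxV
  rw [Submodule.span_image] at hz
  obtain ⟨y, hy, rfl⟩ := hz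
  set x : EuclideanSpace ℝ (Fin (1 + d)) := r • cdE0 d + cdJ d y with hxdef
  -- the two quadratic form bounds
  have hupper : (x : Fin (1+d) → ℝ) ⬝ᵥ (A *ᵥ x) ≤ tA * ((x : Fin (1+d) → ℝ) ⬝ᵥ x) :=
    cd_quad_le_of_mem hAH tA SA (fun i hi => (Finset.mem_filter.mp hi).2) x hxW
  have hMlow : s * ((y : Fin d → ℝ) ⬝ᵥ (y : Fin d → ℝ)) ≤ (y : Fin d → ℝ) ⬝ᵥ (M *ᵥ y) :=
    cd_quad_ge_of_mem hPSD.isHermitian s SM (fun i hi => (Finset.mem_filter.mp hi).2) y hy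
  have hquadA : (x : Fin (1+d) → ℝ) ⬝ᵥ (A *ᵥ x)
      = c * r ^ 2 + 2 * r * (a ⬝ᵥ (y : Fin d → ℝ)) + (y : Fin d → ℝ) ⬝ᵥ (M *ᵥ y) := by
    rw [hxdef, hA]
    exact cd_quad_A M a c r y
  have hnorm : (x : Fin (1+d) → ℝ) ⬝ᵥ (x : Fin (1+d) → ℝ)
      = r ^ 2 + (y : Fin d → ℝ) ⬝ᵥ (y : Fin d → ℝ) := by
    exact cd_norm_eq r y
  have hxx : 0 < (x : Fin (1+d) → ℝ) ⬝ᵥ (x : Fin (1+d) → ℝ) := by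
    rw [cd_dot_eq_inner, real_inner_self_eq_norm_sq]
    exact pow_pos (norm_pos_iff.mpr hx0) 2
  -- Cauchy-Schwarz and the final estimate
  have hyynn : (0:ℝ) ≤ (y : Fin d → ℝ) ⬝ᵥ (y : Fin d → ℝ) :=
    Finset.sum_nonneg fun i _ => mul_self_nonneg _
  set ny := Real.sqrt ((y : Fin d → ℝ) ⬝ᵥ (y : Fin d → ℝ)) with hnydef
  have hny2 : ny ^ 2 = (y : Fin d → ℝ) ⬝ᵥ (y : Fin d → ℝ) := Real.sq_sqrt hyynn
  set na := Real.sqrt (∑ i, (a i) ^ 2) with hnadef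
  have hcs : |a ⬝ᵥ (y : Fin d → ℝ)| ≤ na * ny := by
    have h := cd_cauchy_schwarz a (y : Fin d → ℝ)
    have h2 : ∑ i, ((y : Fin d → ℝ) i) ^ 2 = (y : Fin d → ℝ) ⬝ᵥ (y : Fin d → ℝ) := by
      simp [dotProduct, sq]
    rwa [h2, ← hnydef, ← hnadef] at h
  have hna : 0 ≤ na := Real.sqrt_nonneg _
  have hnyn : 0 ≤ ny := Real.sqrt_nonneg _
  have key : (min c s - na) * ((x : Fin (1+d) → ℝ) ⬝ᵥ (x : Fin (1+d) → ℝ))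
      ≤ (x : Fin (1+d) → ℝ) ⬝ᵥ (A *ᵥ x) := by
    rw [hnorm, hquadA]
    have hβc : min c s ≤ c := min_le_left _ _
    have hβs : min c s ≤ s := min_le_right _ _
    obtain ⟨h5, h6⟩ := abs_le.mp hcs
    rw [← hny2] at hMlow ⊢
    rcases le_total 0 r with hr | hr
    · nlinarith [mul_nonneg hna (sq_nonneg (r - ny)),
        mul_le_mul_of_nonneg_right hβc (sq_nonneg r),
        mul_le_mul_of_nonneg_right hβs (sq_nonneg ny),
        mul_le_mul_of_nonneg_left h5 (by linarith : (0:ℝ) ≤ 2 * r)]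
    · nlinarith [mul_nonneg hna (sq_nonneg (r + ny)),
        mul_le_mul_of_nonneg_right hβc (sq_nonneg r),
        mul_le_mul_of_nonneg_right hβs (sq_nonneg ny),
        mul_le_mul_of_nonpos_left h6 (by linarith : 2 * r ≤ 0)]
  have final : min c s - na ≤ tA :=
    (mul_le_mul_iff_of_pos_right hxx).mp (le_trans key hupper)
  exact final
end

section
/- Let R ∈ [0,1]^{m×n}, fix n̄ with σ_{n̄}(R'(n̄)) > 0, where R'(n̄) zeroes all columns after n̄. Let Π* be the rank-n̄ orthogonal projection (onto top right-singular subspace of R) achieving the best rank-n̄ approximation R·Π* of R, and let I_{n,n̄} be the diagonal 0/1 matrix with ones in the first n̄ diagonal positions. Then ‖Π* − I_{n,n̄}‖_F ≤ 2√2·n·κ / σ_{n̄}(R'(n̄))², where κ = max_{i > n̄} ‖R_i‖₁. -/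
open Matrix

theorem Matrix.isHermitian_transpose_mul_self {m n : ℕ} (A : Matrix (Fin m) (Fin n) ℝ) :
    (Aᵀ * A).IsHermitian := by
  simpa [Matrix.conjTranspose_eq_transpose_of_trivial] using
    Matrix.isHermitian_conjTranspose_mul_self A

noncomputable def sortedSV {m n : ℕ} (A : Matrix (Fin m) (Fin n) ℝ) (k : ℕ) : ℝ :=
  if h : k - 1 < n then
    Real.sqrt (((Matrix.isHermitian_transpose_mul_self A).eigenvalues ∘
      Tuple.sort (Matrix.isHermitian_transpose_mul_self A).eigenvalues)
      (Fin.rev ⟨k - 1, h⟩))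
  else 0

noncomputable def frob {m n : ℕ} (A : Matrix (Fin m) (Fin n) ℝ) : ℝ :=
  Real.sqrt (∑ u, ∑ i, (A u i) ^ 2)

section Helpers

lemma frob_nonneg {m n : ℕ} (A : Matrix (Fin m) (Fin n) ℝ) : 0 ≤ frob A :=
  Real.sqrt_nonneg _

lemma frob_sq {m n : ℕ} (A : Matrix (Fin m) (Fin n) ℝ) :
    frob A ^ 2 = Matrix.trace (Aᵀ * A) := by
  rw [frob, Real.sq_sqrt (by positivity)]
  rw [Matrix.trace]
  simp only [Matrix.diag_apply, Matrix.mul_apply, Matrix.transpose_apply]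
  rw [Finset.sum_comm]
  congr 1; ext u; congr 1; ext i; ring

lemma frob_sub_comm {m n : ℕ} (A B : Matrix (Fin m) (Fin n) ℝ) :
    frob (A - B) = frob (B - A) := by
  unfold frob; congr 1; congr 1; ext u; congr 1; ext i
  simp [Matrix.sub_apply]; ring

lemma trace_mul_le_frob {n : ℕ} (A B : Matrix (Fin n) (Fin n) ℝ) :
    Matrix.trace (A * B) ≤ frob A * frob B := by
  have h : Matrix.trace (A * B) = ∑ p : Fin n × Fin n, A p.1 p.2 * B p.2 p.1 := by
    rw [Matrix.trace]
    simp only [Matrix.diag_apply, Matrix.mul_apply]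
    rw [← Finset.sum_product']
    rfl
  have hA : frob A ^ 2 = ∑ p : Fin n × Fin n, (A p.1 p.2) ^ 2 := by
    rw [frob, Real.sq_sqrt (by positivity)]
    rw [← Finset.sum_product']; rfl
  have hB : frob B ^ 2 = ∑ p : Fin n × Fin n, (B p.2 p.1) ^ 2 := by
    rw [frob, Real.sq_sqrt (by positivity)]
    rw [Fintype.sum_prod_type]
    rw [Finset.sum_comm]
  have cs := Finset.sum_mul_sq_le_sq_mul_sq Finset.univ (fun p : Fin n × Fin n => A p.1 p.2)
    (fun p : Fin n × Fin n => B p.2 p.1)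
  have h1 : Matrix.trace (A * B) ≤ |Matrix.trace (A * B)| := le_abs_self _
  have h2 : |Matrix.trace (A * B)| ^ 2 ≤ (frob A * frob B) ^ 2 := by
    rw [sq_abs, h, mul_pow, hA, hB]; exact cs
  have h3 : |Matrix.trace (A * B)| ≤ frob A * frob B := by
    nlinarith [abs_nonneg (Matrix.trace (A * B)), mul_nonneg (frob_nonneg A) (frob_nonneg B)]
  linarith

lemma psd_diag_nonneg {n : ℕ} {M : Matrix (Fin n) (Fin n) ℝ} (hM : M.PosSemidef) (i : Fin n) :
    0 ≤ M i i := by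
  exact hM.diag_nonneg

lemma psd_trace_nonneg {n : ℕ} {M : Matrix (Fin n) (Fin n) ℝ} (hM : M.PosSemidef) :
    0 ≤ Matrix.trace M :=
  Finset.sum_nonneg fun i _ => psd_diag_nonneg hM i

lemma trace_mul_psd_nonneg {n : ℕ} {A B : Matrix (Fin n) (Fin n) ℝ}
    (hA : A.PosSemidef) (hB : B.PosSemidef) : 0 ≤ Matrix.trace (A * B) := by
  obtain ⟨N, rfl⟩ : ∃ N : Matrix (Fin n) (Fin n) ℝ, B = Nᴴ * N := by
    open scoped MatrixOrder Matrix.Norms.L2Operator in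
    obtain ⟨N, rfl⟩ := CStarAlgebra.nonneg_iff_eq_star_mul_self.mp hB.nonneg
    exact ⟨N, rfl⟩
  have h : Matrix.trace (A * (Nᴴ * N)) = Matrix.trace (N * A * Nᴴ) := by
    rw [← Matrix.mul_assoc, Matrix.trace_mul_cycle]
  rw [h]
  exact psd_trace_nonneg (hA.mul_mul_conjTranspose_same N)

lemma symm_idem_psd {n : ℕ} {S : Matrix (Fin n) (Fin n) ℝ} (hs : Sᵀ = S) (hi : S * S = S) :
    S.PosSemidef := by
  have h := Matrix.posSemidef_conjTranspose_mul_self S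
  rwa [Matrix.conjTranspose_eq_transpose_of_trivial, hs, hi] at h

lemma card_filter_lt (n k : ℕ) (hk : k ≤ n) :
    (Finset.univ.filter fun i : Fin n => (i : ℕ) < k).card = k := by
  have h : (Finset.univ.filter fun i : Fin n => (i : ℕ) < k) =
      Finset.map (Fin.castLEEmb hk) Finset.univ := by
    ext j
    simp only [Finset.mem_filter, Finset.mem_univ, true_and, Finset.mem_map, Fin.castLEEmb_apply]
    constructor
    · intro hj; exact ⟨⟨(j : ℕ), hj⟩, by simp [Fin.ext_iff]⟩
    · rintro ⟨a, rfl⟩; simp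
  rw [h, Finset.card_map, Finset.card_univ, Fintype.card_fin]

lemma trace_symm_idem_eq_rank {n : ℕ} (P : Matrix (Fin n) (Fin n) ℝ)
    (hs : Pᵀ = P) (hi : P * P = P) : Matrix.trace P = (P.rank : ℝ) := by
  have hP : P.IsHermitian := by
    rw [Matrix.IsHermitian, Matrix.conjTranspose_eq_transpose_of_trivial, hs]
  set ν := hP.eigenvalues with hν
  have heig : ∀ j, ν j = 0 ∨ ν j = 1 := by
    intro j
    have hv := hP.mulVec_eigenvectorBasis j
    have hv2 : P *ᵥ (P *ᵥ ⇑(hP.eigenvectorBasis j)) = ν j • (ν j • ⇑(hP.eigenvectorBasis j)) := by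
      rw [hv, Matrix.mulVec_smul, hv]
    rw [Matrix.mulVec_mulVec, hi, hv] at hv2
    have hnz : ⇑(hP.eigenvectorBasis j) ≠ 0 := by
      have hb := hP.eigenvectorBasis.orthonormal.ne_zero j
      intro hcon
      apply hb
      ext i
      exact congrFun hcon i
    have heq : (ν j) • ⇑(hP.eigenvectorBasis j) = (ν j * ν j) • ⇑(hP.eigenvectorBasis j) := by
      rw [mul_smul]; exact hv2
    have hz : (ν j - ν j * ν j) • ⇑(hP.eigenvectorBasis j) = 0 := by
      rw [sub_smul, heq, sub_self]
    rcases smul_eq_zero.mp hz with h | h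
    · have hfac : ν j * (1 - ν j) = 0 := by ring_nf; linarith [h]
      rcases mul_eq_zero.mp hfac with h' | h'
      · exact Or.inl h'
      · exact Or.inr (by linarith)
    · exact absurd h hnz
  have htr : Matrix.trace P = ∑ j, ν j := by
    nth_rewrite 1 [hP.spectral_theorem]
    rw [Unitary.conjStarAlgAut_apply]
    rw [Matrix.trace_mul_cycle]
    have h1 : (star (hP.eigenvectorUnitary : Matrix (Fin n) (Fin n) ℝ)) *
        (hP.eigenvectorUnitary : Matrix (Fin n) (Fin n) ℝ) = 1 :=
      Matrix.UnitaryGroup.star_mul_self _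
    rw [h1, Matrix.one_mul, Matrix.trace_diagonal]
    simp [hν]
  rw [htr, hP.rank_eq_card_non_zero_eigs, Fintype.card_subtype]
  have hsum : ∑ j, ν j = ∑ j ∈ Finset.univ.filter (fun j => hP.eigenvalues j ≠ 0), (1:ℝ) := by
    rw [← Finset.sum_filter_ne_zero]
    refine Finset.sum_congr rfl fun j hj => ?_
    rcases heig j with h | h
    · exact absurd h (Finset.mem_filter.mp hj).2
    · exact h
  rw [hsum, Finset.sum_const, nsmul_eq_mul, mul_one]

lemma residual_trace {m n : ℕ} (A : Matrix (Fin m) (Fin n) ℝ) (S : Matrix (Fin n) (Fin n) ℝ)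
    (hs : Sᵀ = S) (hi : S * S = S) :
    Matrix.trace ((A - A * S)ᵀ * (A - A * S)) =
      Matrix.trace (Aᵀ * A) - Matrix.trace (Aᵀ * A * S) := by
  have hexp : (A - A * S)ᵀ * (A - A * S) =
      Aᵀ * A - Aᵀ * A * S - S * (Aᵀ * A) + S * (Aᵀ * A) * S := by
    rw [Matrix.transpose_sub, Matrix.transpose_mul, hs, Matrix.sub_mul, Matrix.mul_sub,
      Matrix.mul_sub]
    simp only [Matrix.mul_assoc]
    abel
  rw [hexp]
  rw [Matrix.trace_add, Matrix.trace_sub, Matrix.trace_sub]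
  rw [Matrix.trace_mul_cycle S (Aᵀ * A) S, hi]
  ring

lemma frob_le_of_entry_bound {n : ℕ} (A : Matrix (Fin n) (Fin n) ℝ) (c : ℝ) (hc : 0 ≤ c)
    (h : ∀ i j, |A i j| ≤ c) : frob A ≤ (n : ℝ) * c := by
  have hb : ∑ u, ∑ i, (A u i) ^ 2 ≤ ((n : ℝ) * c) ^ 2 := by
    have hrow : ∀ u : Fin n, ∑ i, (A u i) ^ 2 ≤ (n : ℝ) * c ^ 2 := by
      intro u
      calc ∑ i, (A u i) ^ 2 ≤ ∑ _i : Fin n, c ^ 2 := by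
            refine Finset.sum_le_sum fun i _ => ?_
            rw [← sq_abs]
            exact pow_le_pow_left₀ (abs_nonneg _) (h u i) 2
        _ = (n : ℝ) * c ^ 2 := by rw [Finset.sum_const, Finset.card_univ, Fintype.card_fin,
              nsmul_eq_mul]
    calc ∑ u, ∑ i, (A u i) ^ 2 ≤ ∑ _u : Fin n, (n : ℝ) * c ^ 2 :=
          Finset.sum_le_sum fun u _ => hrow u
      _ = ((n : ℝ) * c) ^ 2 := by
          rw [Finset.sum_const, Finset.card_univ, Fintype.card_fin, nsmul_eq_mul]; ring
  rw [frob]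
  calc Real.sqrt (∑ u, ∑ i, (A u i) ^ 2) ≤ Real.sqrt (((n : ℝ) * c) ^ 2) :=
        Real.sqrt_le_sqrt hb
    _ = (n : ℝ) * c := Real.sqrt_sq (by positivity)

end Helpers

set_option maxHeartbeats 2000000 in
/-- Davis–Kahan bound for the optimal rank-n̄ projection:
‖P* − I_{n,n̄}‖_F ≤ 2√2·n·κ / σ_{n̄}(R'(n̄))². -/
theorem stmt_18 {m n : ℕ} (R : Matrix (Fin m) (Fin n) ℝ) (nbar : ℕ)
    (hnbar : nbar < n)
    (hR : ∀ u i, R u i ∈ Set.Icc (0 : ℝ) 1)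
    (R' : Matrix (Fin m) (Fin n) ℝ)
    (hR' : ∀ u i, R' u i = if (i : ℕ) < nbar then R u i else 0)
    (hσ : 0 < sortedSV R' nbar)
    (κ : ℝ)
    (hκ : IsGreatest {x : ℝ | ∃ i : Fin n, nbar ≤ (i : ℕ) ∧ x = ∑ u, |R u i|} κ)
    (P : Matrix (Fin n) (Fin n) ℝ)
    (hPsym : Pᵀ = P) (hPidem : P * P = P) (hPrank : P.rank = nbar)
    (hbest : ∀ Y : Matrix (Fin m) (Fin n) ℝ, Y.rank ≤ nbar →
      frob (R - R * P) ≤ frob (R - Y))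
    (Inbar : Matrix (Fin n) (Fin n) ℝ)
    (hInbar : ∀ i j, Inbar i j = if i = j ∧ (i : ℕ) < nbar then 1 else 0) :
    frob (P - Inbar) ≤ 2 * Real.sqrt 2 * n * κ / (sortedSV R' nbar) ^ 2 := by
  classical
  obtain ⟨⟨i0, hi0, hκ0⟩, hκub⟩ := hκ
  have hκnn : 0 ≤ κ := by rw [hκ0]; exact Finset.sum_nonneg fun u _ => abs_nonneg _
  have hC' : (R'ᵀ * R').IsHermitian := Matrix.isHermitian_transpose_mul_self R'
  set μ : Fin n → ℝ := hC'.eigenvalues with hμdef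
  have hlt : nbar - 1 < n := lt_of_le_of_lt (Nat.sub_le _ _) hnbar
  have hs_eq : sortedSV R' nbar = Real.sqrt ((μ ∘ ⇑(Tuple.sort μ)) (Fin.rev ⟨nbar - 1, hlt⟩)) := by
    rw [sortedSV, dif_pos hlt]
  set δ : ℝ := (μ ∘ ⇑(Tuple.sort μ)) (Fin.rev ⟨nbar - 1, hlt⟩) with hδdef
  have hδpos : 0 < δ := by
    have hσ' := hσ; rw [hs_eq] at hσ'; exact Real.sqrt_pos.mp hσ'
  have hs2 : sortedSV R' nbar ^ 2 = δ := by rw [hs_eq]; exact Real.sq_sqrt hδpos.le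
  -- Inbar is diagonal
  set d : Fin n → ℝ := fun i => if (i : ℕ) < nbar then 1 else 0 with hd
  have hIdiag : Inbar = Matrix.diagonal d := by
    ext i j; rw [hInbar i j, Matrix.diagonal_apply]
    by_cases h1 : i = j
    · subst h1; by_cases h2 : (i:ℕ) < nbar <;> simp [hd, h2]
    · simp [h1]
  have hIsym : Inbarᵀ = Inbar := by rw [hIdiag, Matrix.diagonal_transpose]
  have hIidem : Inbar * Inbar = Inbar := by
    have hdd2 : (fun i : Fin n => d i * d i) = d := by
      funext i; by_cases h : (i:ℕ) < nbar <;> simp [hd, h]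
    rw [hIdiag, Matrix.diagonal_mul_diagonal, hdd2]
  have htrI : Matrix.trace Inbar = (nbar : ℝ) := by
    rw [hIdiag, Matrix.trace_diagonal]
    simp only [hd]
    rw [Finset.sum_boole, card_filter_lt n nbar hnbar.le]
  have hR'eq : R' = R * Inbar := by
    ext u i; rw [hR' u i, hIdiag, Matrix.mul_diagonal]
    by_cases h : (i:ℕ) < nbar <;> simp [hd, h]
  have hR'zero : ∀ u (i : Fin n), nbar ≤ (i:ℕ) → R' u i = 0 := fun u i h => by
    rw [hR' u i, if_neg (not_lt.mpr h)]
  have hC'rows : ∀ (i k : Fin n), nbar ≤ (i:ℕ) → (R'ᵀ * R') i k = 0 := by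
    intro i k h
    rw [Matrix.mul_apply]
    refine Finset.sum_eq_zero fun u _ => ?_
    rw [Matrix.transpose_apply, hR'zero u i h, zero_mul]
  have hrankInbar : Inbar.rank ≤ nbar := by
    rw [hIdiag, Matrix.rank_diagonal, Fintype.card_subtype]
    have hss : (Finset.univ.filter fun i : Fin n => d i ≠ 0) =
        (Finset.univ.filter fun i : Fin n => (i:ℕ) < nbar) := by
      refine Finset.filter_congr fun i _ => ?_
      by_cases h : (i:ℕ) < nbar <;> simp [hd, h]
    rw [hss, card_filter_lt n nbar hnbar.le]
  have hrankC' : (R'ᵀ * R').rank ≤ nbar :=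
    le_trans (Matrix.rank_mul_le_right _ _)
      (by rw [hR'eq]; exact le_trans (Matrix.rank_mul_le_right _ _) hrankInbar)
  have hnbar1 : 1 ≤ nbar := by
    by_contra hcon
    have h0 : nbar = 0 := by omega
    have hR0 : R' = 0 := by ext u i; rw [hR' u i]; simp [h0]
    have hr0 : (R'ᵀ * R').rank = 0 := by rw [hR0]; simp
    rw [hC'.rank_eq_card_non_zero_eigs] at hr0
    have hall : ∀ j, μ j = 0 := by
      intro j; by_contra hj
      have : 0 < Fintype.card {i // hC'.eigenvalues i ≠ 0} := Fintype.card_pos_iff.mpr ⟨⟨j, hj⟩⟩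
      omega
    have : δ = 0 := by rw [hδdef]; exact hall _
    linarith
  have hridx : ((Fin.rev ⟨nbar - 1, hlt⟩ : Fin n) : ℕ) = n - nbar := by
    rw [Fin.val_rev]; simp only [Fin.val_mk]; omega
  -- dichotomy: every nonzero eigenvalue is ≥ δ
  set pos := Finset.univ.filter (fun j => μ j ≠ 0) with hposdef
  have hposcard : pos.card ≤ nbar := by
    have hh := hC'.rank_eq_card_non_zero_eigs
    rw [Fintype.card_subtype] at hh
    calc pos.card = (R'ᵀ * R').rank := hh.symm
      _ ≤ nbar := hrankC'
  set T := (Finset.univ.filter fun p : Fin n => n - nbar ≤ (p:ℕ)).image ⇑(Tuple.sort μ) with hTdef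
  have hTcard : T.card = nbar := by
    rw [hTdef, Finset.card_image_of_injective _ (Equiv.injective _)]
    have hsplit := Finset.card_filter_add_card_filter_not
      (s := (Finset.univ : Finset (Fin n))) (p := fun p : Fin n => (p:ℕ) < n - nbar)
    have hco : (Finset.univ.filter fun p : Fin n => ¬ ((p:ℕ) < n - nbar)) =
        (Finset.univ.filter fun p : Fin n => n - nbar ≤ (p:ℕ)) := by
      refine Finset.filter_congr fun p _ => ?_
      simp [not_lt]
    rw [card_filter_lt n (n - nbar) (Nat.sub_le _ _), hco] at hsplit
    rw [Finset.card_univ, Fintype.card_fin] at hsplit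
    omega
  have hTsub : T ⊆ pos := by
    intro j hj
    rw [hTdef] at hj
    obtain ⟨p, hp, rfl⟩ := Finset.mem_image.mp hj
    have hple : (Fin.rev ⟨nbar - 1, hlt⟩ : Fin n) ≤ p := by
      rw [Fin.le_def, hridx]; exact (Finset.mem_filter.mp hp).2
    have hmono : δ ≤ μ (Tuple.sort μ p) := Tuple.monotone_sort μ hple
    rw [hposdef]
    exact Finset.mem_filter.mpr ⟨Finset.mem_univ _, ne_of_gt (lt_of_lt_of_le hδpos hmono)⟩
  have hTeq : T = pos := Finset.eq_of_subset_of_card_le hTsub (le_trans hposcard hTcard.ge)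
  have hdich : ∀ j, μ j ≠ 0 → δ ≤ μ j := by
    intro j hj
    have hjpos : j ∈ pos := Finset.mem_filter.mpr ⟨Finset.mem_univ _, hj⟩
    rw [← hTeq, hTdef] at hjpos
    obtain ⟨p, hp, rfl⟩ := Finset.mem_image.mp hjpos
    have hple : (Fin.rev ⟨nbar - 1, hlt⟩ : Fin n) ≤ p := by
      rw [Fin.le_def, hridx]; exact (Finset.mem_filter.mp hp).2
    exact Tuple.monotone_sort μ hple
  -- spectral decomposition of R'ᵀ R'
  set V : Matrix (Fin n) (Fin n) ℝ := (hC'.eigenvectorUnitary : Matrix (Fin n) (Fin n) ℝ)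
    with hVdef
  have hVstar : star V * V = 1 := Matrix.UnitaryGroup.star_mul_self _
  have hspec : R'ᵀ * R' = V * Matrix.diagonal μ * star V := by
    have hsp := hC'.spectral_theorem
    have hof : (RCLike.ofReal ∘ hC'.eigenvalues : Fin n → ℝ) = μ := by
      funext j; simp [hμdef]
    rw [hof, Unitary.conjStarAlgAut_apply] at hsp
    exact hsp
  set χ : Fin n → ℝ := fun j => if μ j ≠ 0 then 1 else 0 with hχ
  set Q : Matrix (Fin n) (Fin n) ℝ := V * Matrix.diagonal χ * star V with hQdef
  have hdd : ∀ f g : Fin n → ℝ,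
      (V * Matrix.diagonal f * star V) * (V * Matrix.diagonal g * star V)
        = V * Matrix.diagonal (fun j => f j * g j) * star V := by
    intro f g
    have h1 : (V * Matrix.diagonal f * star V) * (V * Matrix.diagonal g * star V)
        = V * Matrix.diagonal f * ((star V * V) * (Matrix.diagonal g * star V)) := by
      simp only [Matrix.mul_assoc]
    rw [h1, hVstar, Matrix.one_mul, ← Matrix.mul_assoc, Matrix.mul_assoc V,
      Matrix.diagonal_mul_diagonal]
  have hQherm : Qᴴ = Q := by
    rw [hQdef]
    simp only [Matrix.conjTranspose_mul, Matrix.diagonal_conjTranspose, Matrix.star_eq_conjTranspose,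
      Matrix.conjTranspose_conjTranspose]
    have hstar : star χ = χ := by funext j; simp
    rw [hstar, Matrix.mul_assoc]
  have hQsym : Qᵀ = Q := by
    rw [← Matrix.conjTranspose_eq_transpose_of_trivial, hQherm]
  have hχχ : (fun j => χ j * χ j) = χ := by
    funext j; by_cases h : μ j = 0 <;> simp [hχ, h]
  have hQidem : Q * Q = Q := by rw [hQdef, hdd, hχχ]
  have hχμ : (fun j => χ j * μ j) = μ := by
    funext j; by_cases h : μ j = 0 <;> simp [hχ, h]
  have hQC' : Q * (R'ᵀ * R') = R'ᵀ * R' := by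
    rw [hQdef, hspec, hdd, hχμ]
  have htrQ : Matrix.trace Q = (nbar : ℝ) := by
    rw [hQdef, Matrix.trace_mul_cycle, hVstar, Matrix.one_mul, Matrix.trace_diagonal]
    simp only [hχ]
    rw [Finset.sum_boole]
    have : (Finset.univ.filter fun j : Fin n => μ j ≠ 0).card = nbar := by
      rw [← hposdef, ← hTeq, hTcard]
    rw [this]
  have hMpsd : Matrix.PosSemidef (R'ᵀ * R' - δ • Q) := by
    have heq : R'ᵀ * R' - δ • Q = V * Matrix.diagonal (fun j => μ j - δ * χ j) * star V := by
      rw [hspec, hQdef]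
      have hdiag : Matrix.diagonal (fun j => μ j - δ * χ j)
          = Matrix.diagonal μ - δ • Matrix.diagonal χ := by
        rw [← Matrix.diagonal_smul, ← Matrix.diagonal_sub]
        congr 1
      rw [hdiag, Matrix.mul_sub, Matrix.sub_mul, Matrix.mul_smul, Matrix.smul_mul]
    rw [heq]
    have hψ : ∀ j, 0 ≤ μ j - δ * χ j := by
      intro j
      by_cases h : μ j = 0
      · simp [hχ, h]
      · have := hdich j h
        simp only [hχ, if_pos h, mul_one]
        · linarith
    have hpsd := (Matrix.posSemidef_diagonal_iff.mpr hψ).mul_mul_conjTranspose_same V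
    rwa [Matrix.star_eq_conjTranspose]
  have hVrows : ∀ (i j : Fin n), nbar ≤ (i:ℕ) → μ j ≠ 0 → V i j = 0 := by
    intro i j hi hj
    have hCV : (R'ᵀ * R') * V = V * Matrix.diagonal μ := by
      rw [hspec]
      have : V * Matrix.diagonal μ * star V * V = V * Matrix.diagonal μ * (star V * V) := by
        simp only [Matrix.mul_assoc]
      rw [this, hVstar, Matrix.mul_one]
    have h1 : ((R'ᵀ * R') * V) i j = 0 := by
      rw [Matrix.mul_apply]
      exact Finset.sum_eq_zero fun k _ => by rw [hC'rows i k hi, zero_mul]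
    rw [hCV, Matrix.mul_diagonal] at h1
    exact (mul_eq_zero.mp h1).resolve_right hj
  have hQrows : ∀ (i k : Fin n), nbar ≤ (i:ℕ) → Q i k = 0 := by
    intro i k hi
    rw [hQdef, Matrix.mul_apply]
    refine Finset.sum_eq_zero fun j _ => ?_
    rw [Matrix.mul_diagonal]
    by_cases h : μ j = 0
    · simp [hχ, h]
    · rw [hVrows i j hi h]; simp
  have hIQ : Inbar * Q = Q := by
    ext i k
    rw [hIdiag, Matrix.diagonal_mul]
    by_cases h : (i:ℕ) < nbar
    · simp [hd, h]
    · rw [hQrows i k (not_lt.mp h)]; simp [hd, h]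
  have hQI : Q * Inbar = Q := by
    have hh := congrArg Matrix.transpose hIQ
    rwa [Matrix.transpose_mul, hQsym, hIsym] at hh
  have hIC' : Inbar * (R'ᵀ * R') = R'ᵀ * R' := by
    ext i k
    rw [hIdiag, Matrix.diagonal_mul]
    by_cases h : (i:ℕ) < nbar
    · simp [hd, h]
    · rw [hC'rows i k (not_lt.mp h)]; simp [hd, h]
  have hIQpsd : Matrix.PosSemidef (Inbar - Q) := by
    apply symm_idem_psd
    · rw [Matrix.transpose_sub, hIsym, hQsym]
    · rw [Matrix.sub_mul, Matrix.mul_sub, Matrix.mul_sub, hIidem, hIQ, hQI, hQidem,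
        sub_self, sub_zero]
  have hPpsd := symm_idem_psd hPsym hPidem
  have h1Ppsd : Matrix.PosSemidef (1 - P) := by
    apply symm_idem_psd
    · rw [Matrix.transpose_sub, Matrix.transpose_one, hPsym]
    · rw [Matrix.sub_mul, Matrix.mul_sub, Matrix.mul_sub, hPidem]
      simp
  have htrP : Matrix.trace P = (nbar : ℝ) := by
    rw [trace_symm_idem_eq_rank P hPsym hPidem, hPrank]
  set t := Matrix.trace (P * Inbar) with htdef
  set F := frob (P - Inbar) with hFdef
  have hF2 : F ^ 2 = 2 * ((nbar:ℝ) - t) := by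
    rw [hFdef, frob_sq, Matrix.transpose_sub, hPsym, hIsym]
    rw [Matrix.sub_mul, Matrix.mul_sub, Matrix.mul_sub, hPidem, hIidem]
    rw [Matrix.trace_sub, Matrix.trace_sub, Matrix.trace_sub]
    rw [Matrix.trace_mul_comm Inbar P]
    rw [htrP, htrI, ← htdef]
    ring
  have hbineq : δ * ((nbar:ℝ) - t) ≤ Matrix.trace ((Inbar - P) * (R'ᵀ * R')) := by
    have e3 : 0 ≤ Matrix.trace ((1 - P) * (R'ᵀ * R' - δ • Q)) :=
      trace_mul_psd_nonneg h1Ppsd hMpsd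
    have e4 : 0 ≤ Matrix.trace (P * (Inbar - Q)) := trace_mul_psd_nonneg hPpsd hIQpsd
    rw [Matrix.sub_mul, Matrix.one_mul, Matrix.mul_sub, Matrix.trace_sub, Matrix.trace_sub,
      Matrix.trace_sub, Matrix.mul_smul, Matrix.trace_smul, Matrix.trace_smul, htrQ,
      smul_eq_mul, smul_eq_mul] at e3
    rw [Matrix.mul_sub, Matrix.trace_sub, ← htdef] at e4
    have e4' : δ * Matrix.trace (P * Q) ≤ δ * t :=
      mul_le_mul_of_nonneg_left (by linarith) hδpos.le
    have e2 : Matrix.trace (Q * (R'ᵀ * R')) = Matrix.trace (R'ᵀ * R') := by rw [hQC']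
    have e2' : Matrix.trace (P * Q) = Matrix.trace (Q * P) := Matrix.trace_mul_comm _ _
    rw [Matrix.sub_mul, Matrix.trace_sub]
    have e1 : Matrix.trace (Inbar * (R'ᵀ * R')) = Matrix.trace (R'ᵀ * R') := by rw [hIC']
    rw [e1]
    linarith
  have hYrank : (R * Inbar).rank ≤ nbar := le_trans (Matrix.rank_mul_le_right _ _) hrankInbar
  have hbestI := hbest (R * Inbar) hYrank
  have hcineq : Matrix.trace ((Inbar - P) * (Rᵀ * R)) ≤ 0 := by
    have hsq : frob (R - R * P) ^ 2 ≤ frob (R - R * Inbar) ^ 2 :=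
      pow_le_pow_left₀ (frob_nonneg _) hbestI 2
    rw [frob_sq, frob_sq, residual_trace R P hPsym hPidem,
      residual_trace R Inbar hIsym hIidem] at hsq
    rw [Matrix.sub_mul, Matrix.trace_sub, Matrix.trace_mul_comm Inbar (Rᵀ * R),
      Matrix.trace_mul_comm P (Rᵀ * R)]
    linarith
  have hEbound : ∀ (i j : Fin n), |(R'ᵀ * R' - Rᵀ * R) i j| ≤ κ := by
    intro i j
    rw [Matrix.sub_apply, Matrix.mul_apply, Matrix.mul_apply]
    simp only [Matrix.transpose_apply]
    by_cases hi : (i:ℕ) < nbar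
    · by_cases hj : (j:ℕ) < nbar
      · have heq : ∀ u, R' u i * R' u j = R u i * R u j := fun u => by
          rw [hR' u i, hR' u j, if_pos hi, if_pos hj]
        rw [Finset.sum_congr rfl fun u _ => heq u]
        simpa using hκnn
      · have h0 : ∑ u, R' u i * R' u j = 0 :=
          Finset.sum_eq_zero fun u _ => by rw [hR' u j, if_neg hj, mul_zero]
        rw [h0, zero_sub, abs_neg]
        have hnn : 0 ≤ ∑ u, R u i * R u j :=
          Finset.sum_nonneg fun u _ => mul_nonneg (hR u i).1 (hR u j).1
        rw [abs_of_nonneg hnn]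
        have hle : ∑ u, R u i * R u j ≤ ∑ u, |R u j| := by
          refine Finset.sum_le_sum fun u _ => ?_
          rw [abs_of_nonneg (hR u j).1]
          nlinarith [(hR u i).1, (hR u i).2, (hR u j).1]
        exact le_trans hle (hκub ⟨j, not_lt.mp hj, rfl⟩)
    · have h0 : ∑ u, R' u i * R' u j = 0 :=
        Finset.sum_eq_zero fun u _ => by rw [hR'zero u i (not_lt.mp hi), zero_mul]
      rw [h0, zero_sub, abs_neg]
      have hnn : 0 ≤ ∑ u, R u i * R u j :=
        Finset.sum_nonneg fun u _ => mul_nonneg (hR u i).1 (hR u j).1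
      rw [abs_of_nonneg hnn]
      have hle : ∑ u, R u i * R u j ≤ ∑ u, |R u i| := by
        refine Finset.sum_le_sum fun u _ => ?_
        rw [abs_of_nonneg (hR u i).1]
        nlinarith [(hR u j).1, (hR u j).2, (hR u i).1]
      exact le_trans hle (hκub ⟨i, not_lt.mp hi, rfl⟩)
  have hEfrob : frob (R'ᵀ * R' - Rᵀ * R) ≤ (n:ℝ) * κ :=
    frob_le_of_entry_bound _ κ hκnn hEbound
  have hdineq : Matrix.trace ((Inbar - P) * (R'ᵀ * R' - Rᵀ * R)) ≤ F * ((n:ℝ) * κ) := by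
    calc Matrix.trace ((Inbar - P) * (R'ᵀ * R' - Rᵀ * R))
        ≤ frob (Inbar - P) * frob (R'ᵀ * R' - Rᵀ * R) := trace_mul_le_frob _ _
      _ = F * frob (R'ᵀ * R' - Rᵀ * R) := by rw [frob_sub_comm Inbar P, ← hFdef]
      _ ≤ F * ((n:ℝ) * κ) := mul_le_mul_of_nonneg_left hEfrob (hFdef ▸ frob_nonneg _)
  have hsplit : Matrix.trace ((Inbar - P) * (R'ᵀ * R')) =
      Matrix.trace ((Inbar - P) * (Rᵀ * R))
        + Matrix.trace ((Inbar - P) * (R'ᵀ * R' - Rᵀ * R)) := by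
    rw [← Matrix.trace_add, ← Matrix.mul_add]
    have : Rᵀ * R + (R'ᵀ * R' - Rᵀ * R) = R'ᵀ * R' := by abel
    rw [this]
  have hkey : δ * ((nbar:ℝ) - t) ≤ F * ((n:ℝ) * κ) := by
    rw [hsplit] at hbineq
    linarith
  rw [hs2]
  have hFnn : 0 ≤ F := frob_nonneg _
  rcases eq_or_lt_of_le hFnn with h0 | h0
  · rw [← h0]
    apply div_nonneg _ hδpos.le
    have h2nn : (0:ℝ) ≤ 2 * Real.sqrt 2 * n := by positivity
    exact mul_nonneg h2nn hκnn
  · have hF2' : (nbar:ℝ) - t = F ^ 2 / 2 := by rw [hF2]; ring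
    rw [hF2'] at hkey
    have hδF : δ * F ≤ 2 * ((n:ℝ) * κ) := by nlinarith
    have hsqrt2 : (1:ℝ) ≤ Real.sqrt 2 := by
      nlinarith [Real.sq_sqrt (by norm_num : (0:ℝ) ≤ 2), Real.sqrt_nonneg 2]
    rw [le_div_iff₀ hδpos]
    have hnκ : (0:ℝ) ≤ (n:ℝ) * κ := mul_nonneg (Nat.cast_nonneg n) hκnn
    nlinarith
end
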